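/- For independent data points, conditioning on a single data point coincides with intervening on it: if the population distribution P : PMF (Fin n → D) has independent data points with marginals μ : Fin n → PMF D (P x = ∏ i, μ i (x i) for all x), then for every index i : Fin n, every value d : D with μ i d > 0, and every output o : O, the conditional probability equals the interventional probability: Pr[O = o ∣ D_i = d] = ∑_{x} P x * A (Function.update x i d) o. -/

import Mathlib

open Finset
open scoped ENNReal

private lemma sum_update_decomp {n : ℕ} {D : Type} [Fintype D] [DecidableEq D]
    (i : Fin n) (d : D) (g : (Fin n → D) → ℝ≥0∞) :
    ∑ x : Fin n → D, g x
      = ∑ c : D, ∑ x ∈ Finset.univ.filter (fun x : Fin n → D => x i = d),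
          g (Function.update x i c) := by
  rw [← Finset.sum_product']
  refine Finset.sum_nbij' (fun x => (x i, Function.update x i d))
    (fun p => Function.update p.2 i p.1) ?_ ?_ ?_ ?_ ?_
  · intro x _; simp
  · intro p _; simp
  · intro x _
    simp [Function.update_idem, Function.update_eq_self]
  · rintro ⟨c, x⟩ hp
    simp only [Finset.mem_product, Finset.mem_filter, Finset.mem_univ, true_and] at hp
    simp [Function.update_idem, hp, Function.update_eq_self]
  · intro x _
    simp [Function.update_idem, Function.update_eq_self]

private lemma update_prod {n : ℕ} {D : Type} [Fintype D] [DecidableEq D]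
    (μ : Fin n → PMF D) (i : Fin n) (x : Fin n → D) (c : D) :
    ∏ j : Fin n, μ j (Function.update x i c j)
      = μ i c * ∏ j ∈ Finset.univ.erase i, μ j (x j) := by
  have h : ∀ j : Fin n, μ j (Function.update x i c j)
      = Function.update (fun j => μ j (x j)) i (μ i c) j := by
    intro j
    rcases eq_or_ne j i with rfl | hj
    · simp
    · simp [Function.update_of_ne hj]
  rw [Finset.prod_congr rfl (fun j _ => h j),
    Finset.prod_update_of_mem (Finset.mem_univ i), Finset.erase_eq]

theorem conditioning_eq_intervening_for_independent_data
    {n : ℕ} {D O : Type} [Fintype D] [DecidableEq D] [Nonempty D] [Fintype O] [Nonempty O]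
    (A : (Fin n → D) → PMF O) (P : PMF (Fin n → D)) (μ : Fin n → PMF D)
    (hprod : ∀ x : Fin n → D, P x = ∏ i : Fin n, μ i (x i))
    (i : Fin n) (d : D) (hd : μ i d > 0) (o : O) :
    (∑ x ∈ Finset.univ.filter (fun x : Fin n → D => x i = d), P x * A x o) /
        (∑ x ∈ Finset.univ.filter (fun x : Fin n → D => x i = d), P x)
      = ∑ x : Fin n → D, P x * A (Function.update x i d) o := by
  have hμ1 : ∑ c : D, μ i c = 1 := by
    rw [← tsum_fintype (L := .unconditional _)]; exact (μ i).tsum_coe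
  set T : ℝ≥0∞ := ∑ x ∈ Finset.univ.filter (fun x : Fin n → D => x i = d),
      ∏ j ∈ Finset.univ.erase i, μ j (x j) with hT
  -- T = 1
  have hPx : ∀ x ∈ Finset.univ.filter (fun x : Fin n → D => x i = d),
      P x = μ i d * ∏ j ∈ Finset.univ.erase i, μ j (x j) := by
    intro x hx
    simp only [Finset.mem_filter, Finset.mem_univ, true_and] at hx
    rw [hprod x, ← Finset.mul_prod_erase Finset.univ _ (Finset.mem_univ i), hx]
  have hT1 : T = 1 := by
    have h1 : ∑ x : Fin n → D, P x = 1 := by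
      rw [← tsum_fintype (L := .unconditional _)]; exact P.tsum_coe
    rw [sum_update_decomp i d P] at h1
    have : ∀ c : D, ∑ x ∈ Finset.univ.filter (fun x : Fin n → D => x i = d),
        P (Function.update x i c) = μ i c * T := by
      intro c
      rw [hT, Finset.mul_sum]
      refine Finset.sum_congr rfl fun x _ => ?_
      rw [hprod, update_prod]
    rw [Finset.sum_congr rfl (fun c _ => this c), ← Finset.sum_mul, hμ1, one_mul] at h1
    exact h1
  -- denominator
  have hden : ∑ x ∈ Finset.univ.filter (fun x : Fin n → D => x i = d), P x = μ i d := by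
    rw [Finset.sum_congr rfl hPx, ← Finset.mul_sum, ← hT, hT1, mul_one]
  -- RHS
  set S : ℝ≥0∞ := ∑ x ∈ Finset.univ.filter (fun x : Fin n → D => x i = d),
      (∏ j ∈ Finset.univ.erase i, μ j (x j)) * A x o with hS
  have hnum : ∑ x ∈ Finset.univ.filter (fun x : Fin n → D => x i = d), P x * A x o
      = μ i d * S := by
    rw [hS, Finset.mul_sum]
    refine Finset.sum_congr rfl fun x hx => ?_
    rw [hPx x hx, mul_assoc]
  have hrhs : ∑ x : Fin n → D, P x * A (Function.update x i d) o = S := by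
    rw [sum_update_decomp i d (fun x => P x * A (Function.update x i d) o)]
    have : ∀ c : D, ∑ x ∈ Finset.univ.filter (fun x : Fin n → D => x i = d),
        P (Function.update x i c) * A (Function.update (Function.update x i c) i d) o
        = μ i c * S := by
      intro c
      rw [hS, Finset.mul_sum]
      refine Finset.sum_congr rfl fun x hx => ?_
      simp only [Finset.mem_filter, Finset.mem_univ, true_and] at hx
      rw [hprod, update_prod, Function.update_idem,
        show Function.update x i d = x by rw [← hx]; exact Function.update_eq_self i x,
        mul_assoc]
    rw [Finset.sum_congr rfl (fun c _ => this c), ← Finset.sum_mul, hμ1, one_mul]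
  rw [hnum, hden, hrhs, mul_comm, mul_div_assoc,
    ENNReal.div_self hd.ne' ((μ i).apply_ne_top d), mul_one]
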